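/- Let D, M ∈ ℝ^{s×s} and t_L, t_R ∈ ℝ^s, where M is symmetric positive definite, M·D + (M·D)ᵀ = t_R·t_Rᵀ − t_L·t_Lᵀ, D·𝟙 = 0, t_Lᵀ·𝟙 = 1 and t_Rᵀ·𝟙 = 1, and suppose there exists τ ∈ ℝ^s with D·τ = 𝟙 (first-order accuracy). Let o ∈ ℝ^s be nonzero with Dᵀ·M·o = 0, let F = I − o·(M·o)ᵀ/(oᵀ·M·o), and let X ∈ ℝ^{s×s} satisfy D·X = F and t_Lᵀ·X = 0. Then the row vector t_Rᵀ·X equals 𝟙ᵀ·M; consequently the SBP projection scheme is a Runge–Kutta method whose weight vector is b = M·𝟙 (up to the time scaling). -/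
import Mathlib


open Matrix

lemma vecMul_vecMulVec' {s : ℕ} (v a b : Fin s → ℝ) :
    v ᵥ* vecMulVec a b = (v ⬝ᵥ a) • b := by
  ext j
  simp [vecMul, dotProduct, vecMulVec_apply, Finset.sum_mul, mul_assoc]

lemma mul_vecMulVec' {s : ℕ} (M : Matrix (Fin s) (Fin s) ℝ) (a b : Fin s → ℝ) :
    M * vecMulVec a b = vecMulVec (M *ᵥ a) b := by
  ext i j
  simp [Matrix.mul_apply, vecMulVec_apply, mulVec, dotProduct, Finset.sum_mul, mul_assoc]

lemma smul_vecMulVec' {s : ℕ} (c : ℝ) (a b : Fin s → ℝ) :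
    c • vecMulVec a b = vecMulVec (c • a) b := by
  ext i j
  simp [vecMulVec_apply, mul_assoc]

/-- Under the SBP property, consistency (`D 𝟙 = 0`, `t_Lᵀ 𝟙 = 1`,
`t_Rᵀ 𝟙 = 1`), first-order accuracy (`∃ τ, D τ = 𝟙`), and with filter `F` and
matrix representation `X` of `J F`, the row vector `t_Rᵀ X` equals `𝟙ᵀ M`;
i.e. the SBP projection scheme is a Runge-Kutta method with weights `b = M 𝟙`
(up to time scaling). -/
theorem sbp_projection_runge_kutta_weights
    {s : ℕ} (hs : 1 ≤ s)
    (D M : Matrix (Fin s) (Fin s) ℝ) (tL tR : Fin s → ℝ)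
    (hM : M.PosDef)
    (hSBP : M * D + (M * D)ᵀ = vecMulVec tR tR - vecMulVec tL tL)
    (hD1 : D *ᵥ (1 : Fin s → ℝ) = 0)
    (htL1 : tL ⬝ᵥ (1 : Fin s → ℝ) = 1)
    (htR1 : tR ⬝ᵥ (1 : Fin s → ℝ) = 1)
    (hacc : ∃ τ : Fin s → ℝ, D *ᵥ τ = 1)
    (o : Fin s → ℝ) (ho : o ≠ 0) (hoD : Dᵀ *ᵥ (M *ᵥ o) = 0)
    (F : Matrix (Fin s) (Fin s) ℝ)
    (hF : F = 1 - (o ⬝ᵥ (M *ᵥ o))⁻¹ • vecMulVec o (M *ᵥ o))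
    (X : Matrix (Fin s) (Fin s) ℝ)
    (hX : D * X = F) (hXL : tL ᵥ* X = 0) :
    tR ᵥ* X = (1 : Fin s → ℝ) ᵥ* M := by
  obtain ⟨τ, hτ⟩ := hacc
  -- 1 ⬝ᵥ (M *ᵥ o) = 0
  have h1Mo : (1 : Fin s → ℝ) ⬝ᵥ (M *ᵥ o) = 0 := by
    have : (1 : Fin s → ℝ) ⬝ᵥ (M *ᵥ o) = τ ⬝ᵥ (Dᵀ *ᵥ (M *ᵥ o)) := by
      rw [← hτ, dotProduct_comm, dotProduct_mulVec, dotProduct_comm]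
      congr 1
      rw [Matrix.mulVec_transpose]
    rw [this, hoD, dotProduct_zero]
  have key := congrArg (fun A => ((1 : Fin s → ℝ) ᵥ* A) ᵥ* X) hSBP
  simp only [Matrix.vecMul_add, Matrix.add_vecMul, Matrix.vecMul_sub, Matrix.sub_vecMul,
    Matrix.vecMul_transpose] at key
  rw [← Matrix.mulVec_mulVec, hD1, Matrix.mulVec_zero, Matrix.zero_vecMul, add_zero] at key
  rw [vecMul_vecMulVec', vecMul_vecMulVec'] at key
  rw [dotProduct_comm (1 : Fin s → ℝ) tR, htR1, dotProduct_comm (1 : Fin s → ℝ) tL, htL1,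
    one_smul, one_smul, hXL, sub_zero, Matrix.vecMul_vecMul, Matrix.mul_assoc, hX, hF] at key
  rw [← key, Matrix.mul_sub, mul_one, Matrix.mul_smul, mul_vecMulVec', Matrix.vecMul_sub,
    smul_vecMulVec', vecMul_vecMulVec', dotProduct_smul, h1Mo, smul_eq_mul, mul_zero,
    zero_smul, sub_zero]
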